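/- Let Γ be a k₂-graph whose one-skeleton G(Γ) has no nontrivial color- and vertex-fixing graph automorphisms (the subgroup of Aut(G(Γ)) fixing all vertices is trivial). Then in any quasi-product Ω with quasi-factors Λ and Γ, the quasi-factor Γ is stable: p_▷ = id for all p ∈ G(Λ)*. -/

import Mathlib

/-- An edge-colored directed graph with `k` colors. -/
structure ColoredGraph (k : ℕ) where
  V : Type
  E : Type
  es : E → V
  er : E → V
  color : E → Fin k

namespace ColoredGraph

variable {k k₁ k₂ : ℕ}

/-- A (possibly empty) path in a colored graph: a base (source) vertex together with a
composable list of edges, listed from the range end (head of the list is the last edge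
traversed). -/
structure Pth (G : ColoredGraph k) where
  base : G.V
  edges : List G.E
  chain : edges.Chain' fun e f => G.es e = G.er f
  base_src : ∀ e ∈ edges.getLast?, G.es e = base

namespace Pth

variable {G : ColoredGraph k}

/-- The source of a path. -/
def s (p : G.Pth) : G.V := p.base

/-- The range of a path. -/
def r (p : G.Pth) : G.V := (p.edges.head?.map G.er).getD p.base

/-- The color order of a path. -/
def colors (p : G.Pth) : List (Fin k) := p.edges.map G.color

end Pth

/-- `G.IsComp p q pq` means that `pq` is the composite path "first `q`, then `p`"
(written `pq = p q` in range-on-the-left notation). -/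
def IsComp (G : ColoredGraph k) (p q pq : G.Pth) : Prop :=
  p.s = q.r ∧ pq.base = q.base ∧ pq.edges = p.edges ++ q.edges

/-- A factorization rule on the path category of a colored graph: a source-, range- and
color-order-compatible equivalence relation which respects composition (KG0) and such that
every equivalence class contains exactly one path of each permuted color order (KG4).
The quotient is then a `k`-graph. -/
structure FactRule (G : ColoredGraph k) where
  rel : G.Pth → G.Pth → Prop
  iseqv : Equivalence rel
  s_eq : ∀ p q, rel p q → p.s = q.s
  r_eq : ∀ p q, rel p q → p.r = q.r
  kg0 : ∀ p p' q q' pq p'q', rel p p' → rel q q' →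
    G.IsComp p q pq → G.IsComp p' q' p'q' → rel pq p'q'
  kg4 : ∀ (p : G.Pth) (l : List (Fin k)), l.Perm p.colors →
    ∃! q : G.Pth, rel p q ∧ q.colors = l

/-- The Cartesian (box) product of colored graphs. -/
def prodG (G₁ : ColoredGraph k₁) (G₂ : ColoredGraph k₂) : ColoredGraph (k₁ + k₂) where
  V := G₁.V × G₂.V
  E := G₁.E × G₂.V ⊕ G₁.V × G₂.E
  es e := match e with
    | .inl (e, w) => (G₁.es e, w)
    | .inr (v, f) => (v, G₂.es f)
  er e := match e with
    | .inl (e, w) => (G₁.er e, w)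
    | .inr (v, f) => (v, G₂.er f)
  color e := match e with
    | .inl (e, _) => Fin.castAdd k₂ (G₁.color e)
    | .inr (_, f) => Fin.natAdd k₁ (G₂.color f)

/-- The lift of a path of `G₁` to the slice `G₁ × {w}` of the product graph. -/
def lift₁ {G₁ : ColoredGraph k₁} {G₂ : ColoredGraph k₂} (w : G₂.V) (p : G₁.Pth) :
    (prodG G₁ G₂).Pth where
  base := (p.base, w)
  edges := p.edges.map fun e => Sum.inl (e, w)
  chain := by
    apply (List.isChain_map _).mpr
    refine p.chain.imp ?_
    intro a b h
    show ((G₁.es a, w) : G₁.V × G₂.V) = (G₁.er b, w)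
    rw [h]
  base_src := by
    intro e he
    erw [Option.mem_def, List.getLast?_map, Option.map_eq_some_iff] at he
    obtain ⟨a, ha, rfl⟩ := he
    show ((G₁.es a, w) : G₁.V × G₂.V) = (p.base, w)
    rw [p.base_src a ha]

/-- The lift of a path of `G₂` to the slice `{x} × G₂` of the product graph. -/
def lift₂ {G₁ : ColoredGraph k₁} {G₂ : ColoredGraph k₂} (x : G₁.V) (q : G₂.Pth) :
    (prodG G₁ G₂).Pth where
  base := (x, q.base)
  edges := q.edges.map fun f => Sum.inr (x, f)
  chain := by
    apply (List.isChain_map _).mpr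
    refine q.chain.imp ?_
    intro a b h
    show ((x, G₂.es a) : G₁.V × G₂.V) = (x, G₂.er b)
    rw [h]
  base_src := by
    intro e he
    erw [Option.mem_def, List.getLast?_map, Option.map_eq_some_iff] at he
    obtain ⟨a, ha, rfl⟩ := he
    show ((x, G₂.es a) : G₁.V × G₂.V) = (x, q.base)
    rw [q.base_src a ha]

/-- The underlying undirected graph is connected. -/
def Connected (G : ColoredGraph k) : Prop :=
  ∀ a b : G.V,
    Relation.ReflTransGen
      (fun u v => ∃ e : G.E, (G.es e = u ∧ G.er e = v) ∨ (G.es e = v ∧ G.er e = u)) a b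

/-- Row-finiteness at the level of the one-skeleton: for each vertex and color order there
are only finitely many paths into that vertex with that color order. -/
def RowFinite (G : ColoredGraph k) : Prop :=
  ∀ (v : G.V) (l : List (Fin k)), {p : G.Pth | p.r = v ∧ p.colors = l}.Finite

/-- A vertex-fixing automorphism of a colored graph. -/
def VertexFixingAut (G : ColoredGraph k) (F : G.E → G.E) : Prop :=
  Function.Bijective F ∧
    ∀ e, G.es (F e) = G.es e ∧ G.er (F e) = G.er e ∧ G.color (F e) = G.color e

end ColoredGraph

open ColoredGraph

/-- A quasi-product `(k₁+k₂)`-graph: its one-skeleton is the product of the one-skeletons of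
`Λ = (G₁, rLam)` and `Γ = (G₂, rGam)`, i.e. the quasi-product is given by a factorization
rule `rOmega` on the product graph; the quasi-factors embed as the slices at `base₂`
resp. `base₁` (the injective degree-compatible functors `ψ₁, ψ₂`). -/
structure QuasiProduct (k₁ k₂ : ℕ) where
  G₁ : ColoredGraph k₁
  G₂ : ColoredGraph k₂
  rLam : G₁.FactRule
  rGam : G₂.FactRule
  rOmega : (prodG G₁ G₂).FactRule
  base₁ : G₁.V
  base₂ : G₂.V
  emb₁ : ∀ p q : G₁.Pth, rLam.rel p q ↔ rOmega.rel (lift₁ base₂ p) (lift₁ base₂ q)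
  emb₂ : ∀ p q : G₂.Pth, rGam.rel p q ↔ rOmega.rel (lift₂ base₁ p) (lift₂ base₁ q)

variable {k₁ k₂ : ℕ}

/-- `ActsTo R p q q' p'` expresses, for a factorization rule `R` on the product graph, that
the Zappa–Szép actions of the associated matched pair satisfy `p ▷ q = q'` and
`q ◁ p = p'`; that is, `([p], r q)(s p, [q]) = (r p, [q'])([p'], s q)`, with `q'` and `p'`
of the same color order as `q` and `p`. -/
def ActsTo {G₁ : ColoredGraph k₁} {G₂ : ColoredGraph k₂}
    (R : (prodG G₁ G₂).FactRule) (p : G₁.Pth) (q : G₂.Pth)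
    (q' : G₂.Pth) (p' : G₁.Pth) : Prop :=
  ∃ lhs rhs : (prodG G₁ G₂).Pth,
    (prodG G₁ G₂).IsComp (lift₁ q.r p) (lift₂ p.s q) lhs ∧
    (prodG G₁ G₂).IsComp (lift₂ p.r q') (lift₁ q.s p') rhs ∧
    R.rel lhs rhs ∧ q'.colors = q.colors ∧ p'.colors = p.colors

/-- The quasi-factor `Γ` of a quasi-product is *stable* if the left action is trivial:
`p ▷ q = q` for all paths. -/
def QuasiProduct.Stable (Q : QuasiProduct k₁ k₂) : Prop :=
  ∀ (p : Q.G₁.Pth) (q q' : Q.G₂.Pth) (p' : Q.G₁.Pth),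
    ActsTo Q.rOmega p q q' p' → q' = q

/-- The factorization rule of the slice `Ω₁^w`, i.e. the rule induced on `G₁`-paths by the
slice `G₁ × {w}` of the quasi-product. -/
def QuasiProduct.relAt₁ (Q : QuasiProduct k₁ k₂) (w : Q.G₂.V) (p p' : Q.G₁.Pth) : Prop :=
  Q.rOmega.rel (lift₁ w p) (lift₁ w p')

/-- The factorization rule of the slice `Ω₂^x`. -/
def QuasiProduct.relAt₂ (Q : QuasiProduct k₁ k₂) (x : Q.G₁.V) (q q' : Q.G₂.Pth) : Prop :=
  Q.rOmega.rel (lift₂ x q) (lift₂ x q')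

/-- `F` implements a (vertex- and color-preserving) isomorphism from the quotient
`k`-graph `G*/R` to `G*/S`. -/
def RelIsoVia (G : ColoredGraph k) (R S : G.Pth → G.Pth → Prop) (F : G.Pth → G.Pth) :
    Prop :=
  (∀ p, (F p).s = p.s ∧ (F p).r = p.r ∧ (F p).colors = p.colors) ∧
  (∀ p p', R p p' ↔ S (F p) (F p')) ∧
  (∀ p', ∃ p, S (F p) p') ∧
  (∀ p1 p2 p c, G.IsComp p1 p2 p → G.IsComp (F p1) (F p2) c → S (F p) c)

/-- An isomorphism of the `k`-graphs determined by two factorization rules on the same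
colored graph, given by a vertex bijection `θV` and a map on paths `θP`. -/
def IsoOfRules {k : ℕ} (G : ColoredGraph k) (R S : G.FactRule)
    (θV : G.V → G.V) (θP : G.Pth → G.Pth) : Prop :=
  Function.Bijective θV ∧
  (∀ p, (θP p).s = θV p.s ∧ (θP p).r = θV p.r ∧ (θP p).colors = p.colors) ∧
  (∀ p p', R.rel p p' ↔ S.rel (θP p) (θP p')) ∧
  (∀ q, ∃ p, S.rel (θP p) q) ∧
  (∀ p1 p2 p c, G.IsComp p1 p2 p → G.IsComp (θP p1) (θP p2) c → S.rel (θP p) c)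

/-- `S` is the product factorization rule of `Λ = (G₁, rLam)` and `Γ = (G₂, rGam)`: its
slices are given by the factor rules and both Zappa–Szép actions are trivial. -/
def IsProductRule (G₁ : ColoredGraph k₁) (G₂ : ColoredGraph k₂)
    (rLam : G₁.FactRule) (rGam : G₂.FactRule) (S : (prodG G₁ G₂).FactRule) : Prop :=
  (∀ (w : G₂.V) (p p' : G₁.Pth), rLam.rel p p' ↔ S.rel (lift₁ w p) (lift₁ w p')) ∧
  (∀ (x : G₁.V) (q q' : G₂.Pth), rGam.rel q q' ↔ S.rel (lift₂ x q) (lift₂ x q')) ∧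
  (∀ (p : G₁.Pth) (q q' : G₂.Pth) (p' : G₁.Pth),
    ActsTo S p q q' p' → q' = q ∧ p' = p)

section Stmt12Aux

open ColoredGraph

namespace ColoredGraph

variable {k k₁ k₂ : ℕ}

theorem Pth.ext' {G : ColoredGraph k} {p q : G.Pth} (h1 : p.base = q.base)
    (h2 : p.edges = q.edges) : p = q := by
  cases p; cases q; cases h1; cases h2; rfl

@[simp] theorem Pth.s_def {G : ColoredGraph k} (p : G.Pth) : p.s = p.base := rfl

theorem Pth.r_nil {G : ColoredGraph k} {p : G.Pth} (h : p.edges = []) : p.r = p.base := by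
  simp [Pth.r, h]

theorem Pth.r_cons {G : ColoredGraph k} {p : G.Pth} {e l} (h : p.edges = e :: l) :
    p.r = G.er e := by simp [Pth.r, h]

variable {G₁ : ColoredGraph k₁} {G₂ : ColoredGraph k₂}

@[simp] theorem lift₁_base (w : G₂.V) (p : G₁.Pth) :
    (lift₁ (G₂ := G₂) w p).base = (p.base, w) := rfl

@[simp] theorem lift₁_edges (w : G₂.V) (p : G₁.Pth) :
    (lift₁ (G₂ := G₂) w p).edges = p.edges.map (fun e => Sum.inl (e, w)) := rfl

@[simp] theorem lift₂_base (x : G₁.V) (q : G₂.Pth) :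
    (lift₂ (G₁ := G₁) x q).base = (x, q.base) := rfl

@[simp] theorem lift₂_edges (x : G₁.V) (q : G₂.Pth) :
    (lift₂ (G₁ := G₁) x q).edges = q.edges.map (fun f => Sum.inr (x, f)) := rfl

theorem lift₁_s (w : G₂.V) (p : G₁.Pth) : (lift₁ (G₂ := G₂) w p).s = (p.s, w) := rfl

theorem lift₂_s (x : G₁.V) (q : G₂.Pth) : (lift₂ (G₁ := G₁) x q).s = (x, q.s) := rfl

theorem lift₁_r (w : G₂.V) (p : G₁.Pth) : (lift₁ (G₂ := G₂) w p).r = (p.r, w) := by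
  rcases h : p.edges with _ | ⟨e, l⟩
  · rw [Pth.r_nil (p := lift₁ w p) (by simp [h]; rfl), Pth.r_nil h]; rfl
  · rw [Pth.r_cons (p := lift₁ w p) (e := Sum.inl (e, w)) (l := l.map fun e => Sum.inl (e, w))
      (by rw [lift₁_edges, h]; rfl), Pth.r_cons h]; rfl

theorem lift₂_r (x : G₁.V) (q : G₂.Pth) : (lift₂ (G₁ := G₁) x q).r = (x, q.r) := by
  rcases h : q.edges with _ | ⟨e, l⟩
  · rw [Pth.r_nil (p := lift₂ x q) (by simp [h]; rfl), Pth.r_nil h]; rfl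
  · rw [Pth.r_cons (p := lift₂ x q) (e := Sum.inr (x, e)) (l := l.map fun f => Sum.inr (x, f))
      (by rw [lift₂_edges, h]; rfl), Pth.r_cons h]; rfl

theorem lift₁_colors (w : G₂.V) (p : G₁.Pth) :
    (lift₁ (G₂ := G₂) w p).colors = p.colors.map (Fin.castAdd k₂) := by
  simp only [Pth.colors, lift₁_edges, List.map_map]; exact List.map_map.trans rfl

theorem lift₂_colors (x : G₁.V) (q : G₂.Pth) :
    (lift₂ (G₁ := G₁) x q).colors = q.colors.map (Fin.natAdd k₁) := by
  simp only [Pth.colors, lift₂_edges, List.map_map]; exact List.map_map.trans rfl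

/-- Explicit composite path. -/
def compPth {G : ColoredGraph k} (p q : G.Pth) (h : p.s = q.r) : G.Pth where
  base := q.base
  edges := p.edges ++ q.edges
  chain := by
    show List.IsChain _ _
    rw [List.isChain_append]
    refine ⟨p.chain, q.chain, ?_⟩
    intro x hx y hy
    rw [p.base_src x hx, ← Pth.s_def, h]
    rcases hq : q.edges with _ | ⟨e, l⟩
    · rw [hq] at hy; simp at hy
    · rw [hq] at hy; simp at hy
      rw [Pth.r_cons hq, hy]
  base_src := by
    intro e he
    rcases hq : q.edges with _ | ⟨y, l⟩
    · rw [hq, List.append_nil] at he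
      rw [p.base_src e he, ← Pth.s_def, h, Pth.r_nil hq]
    · rw [hq, List.getLast?_append_cons] at he
      exact q.base_src e (by rw [hq]; exact he)

theorem isComp_compPth {G : ColoredGraph k} (p q : G.Pth) (h : p.s = q.r) :
    G.IsComp p q (compPth p q h) := ⟨h, rfl, rfl⟩

theorem IsComp.unique {G : ColoredGraph k} {p q r₁ r₂ : G.Pth}
    (h1 : G.IsComp p q r₁) (h2 : G.IsComp p q r₂) : r₁ = r₂ :=
  Pth.ext' (h1.2.1.trans h2.2.1.symm) (h1.2.2.trans h2.2.2.symm)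

theorem IsComp.r_eq {G : ColoredGraph k} {p q pq : G.Pth} (h : G.IsComp p q pq) :
    pq.r = p.r := by
  rcases hp : p.edges with _ | ⟨e, l⟩
  · have he : pq.edges = q.edges := by rw [h.2.2, hp, List.nil_append]
    have hpr : p.r = q.r := by rw [Pth.r_nil hp, ← Pth.s_def, h.1]
    rcases hq : q.edges with _ | ⟨y, t⟩
    · rw [Pth.r_nil (he.trans hq), h.2.1, hpr, Pth.r_nil hq]
    · rw [Pth.r_cons (he.trans hq), hpr, Pth.r_cons hq]
  · rw [Pth.r_cons hp, Pth.r_cons (p := pq) (by rw [h.2.2, hp]; rfl)]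

theorem IsComp.colors_eq {G : ColoredGraph k} {p q pq : G.Pth} (h : G.IsComp p q pq) :
    pq.colors = p.colors ++ q.colors := by
  simp [Pth.colors, h.2.2]

/-- Split a path along a splitting of its edge list. -/
theorem split_edges {G : ColoredGraph k} (P : G.Pth) (A B : List G.E)
    (h : P.edges = A ++ B) :
    ∃ P₁ P₂ : G.Pth, G.IsComp P₁ P₂ P ∧ P₁.edges = A ∧ P₂.edges = B := by
  have hchain := P.chain
  rw [h] at hchain
  change List.IsChain _ _ at hchain
  rw [List.isChain_append] at hchain
  obtain ⟨hA, hB, hAB⟩ := hchain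
  have hB_src : ∀ e ∈ B.getLast?, G.es e = P.base := by
    intro e he
    rcases hBn : B with _ | ⟨y, t⟩
    · rw [hBn] at he; simp at he
    · refine P.base_src e ?_
      rw [h, hBn, List.getLast?_append_cons]
      rw [hBn] at he; exact he
  refine ⟨⟨(Pth.mk P.base B hB hB_src).r, A, hA, ?_⟩, ⟨P.base, B, hB, hB_src⟩,
    ⟨rfl, rfl, h⟩, rfl, rfl⟩
  intro e he
  show G.es e = (B.head?.map G.er).getD P.base
  rcases hBh : B.head? with _ | y
  · have hBn : B = [] := List.head?_eq_none_iff.mp hBh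
    simp only [Option.map_none, Option.getD_none]
    exact P.base_src e (by rw [h, hBn, List.append_nil]; exact he)
  · simp only [Option.map_some, Option.getD_some]
    exact hAB e he y hBh

theorem exists_map_of_inl :
    ∀ (l : List (prodG G₁ G₂).E) (b : G₁.V × G₂.V),
      l.Chain' (fun e f => (prodG G₁ G₂).es e = (prodG G₁ G₂).er f) →
      (∀ e ∈ l.getLast?, (prodG G₁ G₂).es e = b) →
      (∀ e ∈ l, ∃ a w, e = Sum.inl (a, w)) →
      ∃ l' : List G₁.E, l = l'.map fun a => Sum.inl (a, b.2) := by
  intro l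
  induction l using List.reverseRecOn with
  | nil => exact fun b _ _ _ => ⟨[], rfl⟩
  | append_singleton t e ih =>
    intro b hc hs hl
    obtain ⟨hct, -, hjun⟩ := List.isChain_append.mp hc
    obtain ⟨a, w, rfl⟩ := hl e (by simp)
    have hse : ((G₁.es a, w) : G₁.V × G₂.V) = b :=
      hs (Sum.inl (a, w)) (by erw [List.getLast?_concat]; rfl)
    have hw : w = b.2 := congrArg Prod.snd hse
    subst hw
    obtain ⟨l', hl'⟩ := ih ((G₁.er a, b.2)) hct
      (fun x hx => hjun x hx _ rfl)
      (fun x hx => hl x (List.mem_append_left _ hx))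
    exact ⟨l' ++ [a], by rw [hl']; simp; rfl⟩

theorem exists_map_of_inr :
    ∀ (l : List (prodG G₁ G₂).E) (b : G₁.V × G₂.V),
      l.Chain' (fun e f => (prodG G₁ G₂).es e = (prodG G₁ G₂).er f) →
      (∀ e ∈ l.getLast?, (prodG G₁ G₂).es e = b) →
      (∀ e ∈ l, ∃ x f, e = Sum.inr (x, f)) →
      ∃ l' : List G₂.E, l = l'.map fun f => Sum.inr (b.1, f) := by
  intro l
  induction l using List.reverseRecOn with
  | nil => exact fun b _ _ _ => ⟨[], rfl⟩
  | append_singleton t e ih =>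
    intro b hc hs hl
    obtain ⟨hct, -, hjun⟩ := List.isChain_append.mp hc
    obtain ⟨x, f, rfl⟩ := hl e (by simp)
    have hse : ((x, G₂.es f) : G₁.V × G₂.V) = b :=
      hs (Sum.inr (x, f)) (by erw [List.getLast?_concat]; rfl)
    have hx : x = b.1 := congrArg Prod.fst hse
    subst hx
    obtain ⟨l', hl'⟩ := ih ((b.1, G₂.er f)) hct
      (fun y hy => hjun y hy _ rfl)
      (fun y hy => hl y (List.mem_append_left _ hy))
    exact ⟨l' ++ [f], by rw [hl']; simp; rfl⟩

theorem un_lift₁ (P : (prodG G₁ G₂).Pth)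
    (h : ∀ e ∈ P.edges, ∃ a w, e = Sum.inl (a, w)) :
    ∃ p' : G₁.Pth, P = lift₁ P.base.2 p' := by
  obtain ⟨l', hl'⟩ := exists_map_of_inl P.edges P.base P.chain P.base_src h
  refine ⟨⟨P.base.1, l', ?_, ?_⟩, ?_⟩
  · have hc := P.chain
    erw [hl'] at hc
    change List.IsChain _ _ at hc
    erw [List.isChain_map] at hc
    exact hc.imp fun _ _ hab => congrArg Prod.fst hab
  · intro a ha
    have hmem : Sum.inl (a, P.base.2) ∈ P.edges.getLast? := by
      erw [hl', List.getLast?_map]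
      exact congrArg (Option.map _) (Option.mem_def.mp ha)
    exact congrArg Prod.fst (P.base_src _ hmem)
  · exact Pth.ext' (Prod.mk.eta).symm hl'

theorem un_lift₂ (P : (prodG G₁ G₂).Pth)
    (h : ∀ e ∈ P.edges, ∃ x f, e = Sum.inr (x, f)) :
    ∃ q' : G₂.Pth, P = lift₂ P.base.1 q' := by
  obtain ⟨l', hl'⟩ := exists_map_of_inr P.edges P.base P.chain P.base_src h
  refine ⟨⟨P.base.2, l', ?_, ?_⟩, ?_⟩
  · have hc := P.chain
    erw [hl'] at hc
    change List.IsChain _ _ at hc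
    erw [List.isChain_map] at hc
    exact hc.imp fun _ _ hab => congrArg Prod.snd hab
  · intro a ha
    have hmem : Sum.inr (P.base.1, a) ∈ P.edges.getLast? := by
      erw [hl', List.getLast?_map]
      exact congrArg (Option.map _) (Option.mem_def.mp ha)
    exact congrArg Prod.snd (P.base_src _ hmem)
  · exact Pth.ext' (Prod.mk.eta).symm hl'

theorem eq_inr_of_color_natAdd {e : (prodG G₁ G₂).E} {c : Fin k₂}
    (h : (prodG G₁ G₂).color e = Fin.natAdd k₁ c) : ∃ x f, e = Sum.inr (x, f) := by
  rcases e with ⟨a, w⟩ | ⟨x, f⟩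
  · exfalso
    have hv := congrArg Fin.val h
    have h1 : ((prodG G₁ G₂).color (Sum.inl (a, w))).val = (G₁.color a).val := rfl
    rw [h1] at hv
    simp only [Fin.coe_natAdd] at hv
    have := (G₁.color a).isLt
    omega
  · exact ⟨x, f, rfl⟩

theorem eq_inl_of_color_castAdd {e : (prodG G₁ G₂).E} {c : Fin k₁}
    (h : (prodG G₁ G₂).color e = Fin.castAdd k₂ c) : ∃ a w, e = Sum.inl (a, w) := by
  rcases e with ⟨a, w⟩ | ⟨x, f⟩
  · exact ⟨a, w, rfl⟩
  · exfalso
    have hv := congrArg Fin.val h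
    have h1 : ((prodG G₁ G₂).color (Sum.inr (x, f))).val = k₁ + (G₂.color f).val := rfl
    rw [h1] at hv
    simp only [Fin.coe_castAdd] at hv
    have := c.isLt
    omega

theorem natAdd_inj : Function.Injective (Fin.natAdd k₁ : Fin k₂ → Fin (k₁ + k₂)) := by
  intro a b hab
  have := congrArg Fin.val hab
  simp only [Fin.coe_natAdd] at this
  exact Fin.ext (by omega)

theorem castAdd_inj : Function.Injective (Fin.castAdd k₂ : Fin k₁ → Fin (k₁ + k₂)) := by
  intro a b hab
  have := congrArg Fin.val hab
  simp only [Fin.coe_castAdd] at this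
  exact Fin.ext this

theorem inl_map_inj (w : G₂.V) :
    Function.Injective (fun e => (Sum.inl (e, w) : (prodG G₁ G₂).E)) := by
  intro a b hab; simpa using hab

theorem inr_map_inj (x : G₁.V) :
    Function.Injective (fun f => (Sum.inr (x, f) : (prodG G₁ G₂).E)) := by
  intro a b hab; simpa using hab

/-- A one-edge path. -/
def edgePath (G : ColoredGraph k) (f : G.E) : G.Pth where
  base := G.es f
  edges := [f]
  chain := List.isChain_singleton _
  base_src := by intro e he; simp at he; rw [he]

@[simp] theorem edgePath_edges (G : ColoredGraph k) (f : G.E) :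
    (edgePath G f).edges = [f] := rfl

@[simp] theorem edgePath_base (G : ColoredGraph k) (f : G.E) :
    (edgePath G f).base = G.es f := rfl

theorem edgePath_r (G : ColoredGraph k) (f : G.E) : (edgePath G f).r = G.er f := rfl

/-- Truncating the last-traversed edge off a path. -/
def tailPath {G : ColoredGraph k} (q : G.Pth) (f : G.E) (rest : List G.E)
    (h : q.edges = f :: rest) : G.Pth where
  base := q.base
  edges := rest
  chain := (List.isChain_cons.mp (h ▸ q.chain)).2
  base_src := by
    intro e he
    rcases hr : rest with _ | ⟨g, t⟩
    · rw [hr] at he; simp at he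
    · refine q.base_src e ?_
      rw [h, hr, List.getLast?_cons_cons]
      rw [hr] at he; exact he

@[simp] theorem tailPath_edges {G : ColoredGraph k} (q : G.Pth) (f : G.E) (rest : List G.E)
    (h : q.edges = f :: rest) : (tailPath q f rest h).edges = rest := rfl

theorem isComp_head_tail {G : ColoredGraph k} (q : G.Pth) (f : G.E) (rest : List G.E)
    (h : q.edges = f :: rest) :
    G.IsComp (edgePath G f) (tailPath q f rest h) q := by
  refine ⟨?_, rfl, by rw [h]; rfl⟩
  show G.es f = (rest.head?.map G.er).getD q.base
  rcases hr : rest.head? with _ | g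
  · simp only [Option.map_none, Option.getD_none]
    have hrn : rest = [] := List.head?_eq_none_iff.mp hr
    exact q.base_src f (by rw [h, hrn]; rfl)
  · simp only [Option.map_some, Option.getD_some]
    have hc := q.chain
    rw [h] at hc
    exact (List.isChain_cons.mp hc).1 g hr

end ColoredGraph

end Stmt12Aux
section Stmt12Main

open ColoredGraph

variable {k₁ k₂ : ℕ} {G₁ : ColoredGraph k₁} {G₂ : ColoredGraph k₂}

/-- Existence of the Zappa–Szép actions in a quasi-product. -/
theorem exists_act (R : (prodG G₁ G₂).FactRule) (p : G₁.Pth) (q : G₂.Pth) :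
    ∃ q' p', ActsTo R p q q' p' := by
  have hcomp : (lift₁ (G₂ := G₂) q.r p).s = (lift₂ (G₁ := G₁) p.s q).r := by
    rw [lift₁_s, lift₂_r]
  set lhs := ColoredGraph.compPth _ _ hcomp with hlhs
  have hlc : lhs.colors = p.colors.map (Fin.castAdd k₂) ++ q.colors.map (Fin.natAdd k₁) := by
    rw [(isComp_compPth _ _ hcomp).colors_eq, lift₁_colors, lift₂_colors]
  obtain ⟨rhs, ⟨hrel, hcol⟩, -⟩ :=
    R.kg4 lhs (q.colors.map (Fin.natAdd k₁) ++ p.colors.map (Fin.castAdd k₂))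
      (by rw [hlc]; exact List.perm_append_comm)
  have hcol' : rhs.edges.map (prodG G₁ G₂).color
      = q.colors.map (Fin.natAdd k₁) ++ p.colors.map (Fin.castAdd k₂) := hcol
  have hsplit : rhs.edges
      = rhs.edges.take (q.colors.map (Fin.natAdd k₁)).length
        ++ rhs.edges.drop (q.colors.map (Fin.natAdd k₁)).length :=
    (List.take_append_drop _ _).symm
  have htakecol : (rhs.edges.take (q.colors.map (Fin.natAdd k₁)).length).map
      (prodG G₁ G₂).color = q.colors.map (Fin.natAdd k₁) := by
    rw [List.map_take, hcol', List.take_left]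
  have hdropcol : (rhs.edges.drop (q.colors.map (Fin.natAdd k₁)).length).map
      (prodG G₁ G₂).color = p.colors.map (Fin.castAdd k₂) := by
    rw [List.map_drop, hcol', List.drop_left]
  obtain ⟨P₁, P₂, hPP, hP₁e, hP₂e⟩ := split_edges rhs _ _ hsplit
  have hP₁inr : ∀ e ∈ P₁.edges, ∃ x f, e = Sum.inr (x, f) := by
    intro e he
    have hmem : (prodG G₁ G₂).color e ∈ q.colors.map (Fin.natAdd k₁) := by
      rw [← htakecol]
      exact List.mem_map_of_mem (hP₁e ▸ he)
    obtain ⟨c, -, hc⟩ := List.mem_map.mp hmem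
    exact eq_inr_of_color_natAdd hc.symm
  have hP₂inl : ∀ e ∈ P₂.edges, ∃ a w, e = Sum.inl (a, w) := by
    intro e he
    have hmem : (prodG G₁ G₂).color e ∈ p.colors.map (Fin.castAdd k₂) := by
      rw [← hdropcol]
      exact List.mem_map_of_mem (hP₂e ▸ he)
    obtain ⟨c, -, hc⟩ := List.mem_map.mp hmem
    exact eq_inl_of_color_castAdd hc.symm
  obtain ⟨q', hq'⟩ := un_lift₂ P₁ hP₁inr
  obtain ⟨p', hp'⟩ := un_lift₁ P₂ hP₂inl
  have hbase2 : P₂.base = (p.s, q.base) := by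
    have hb : lhs.base = rhs.base := R.s_eq _ _ hrel
    rw [hPP.2.1] at hb
    exact hb.symm
  have hw : P₂.base.2 = q.base := congrArg Prod.snd hbase2
  have hlr : lhs.r = (p.r, q.r) := by
    rw [(isComp_compPth _ _ hcomp).r_eq, lift₁_r]
  have hrr : rhs.r = (p.r, q.r) := (R.r_eq _ _ hrel).symm.trans hlr
  have hP₁r : P₁.r = (p.r, q.r) := hPP.r_eq.symm.trans hrr
  have hx : P₁.base.1 = p.r := by
    rw [hq', lift₂_r] at hP₁r
    exact congrArg Prod.fst hP₁r
  have e₁ : lift₂ (G₁ := G₁) p.r q' = P₁ := by rw [hq', hx]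
  have e₂ : lift₁ (G₂ := G₂) q.s p' = P₂ := by rw [hp', hw]; rfl
  refine ⟨q', p', lhs, rhs, isComp_compPth _ _ hcomp, ?_, hrel, ?_, ?_⟩
  · rw [e₁, e₂]; exact hPP
  · -- q'.colors = q.colors
    have h1 : P₁.colors = q'.colors.map (Fin.natAdd k₁) := by rw [hq', lift₂_colors]
    have h2 : P₁.colors = q.colors.map (Fin.natAdd k₁) := by
      show P₁.edges.map _ = _
      rw [hP₁e]; exact htakecol
    exact List.map_injective_iff.mpr natAdd_inj (h1.symm.trans h2)
  · -- p'.colors = p.colors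
    have h1 : P₂.colors = p'.colors.map (Fin.castAdd k₂) := by rw [hp', lift₁_colors]
    have h2 : P₂.colors = p.colors.map (Fin.castAdd k₂) := by
      show P₂.edges.map _ = _
      rw [hP₂e]; exact hdropcol
    exact List.map_injective_iff.mpr castAdd_inj (h1.symm.trans h2)

theorem act_nil {R : (prodG G₁ G₂).FactRule} {p : G₁.Pth} {q q' : G₂.Pth} {p' : G₁.Pth}
    (h : ActsTo R p q q' p') (hq : q.edges = []) : q' = q := by
  obtain ⟨lhs, rhs, hL, hR, hrel, hqc, hpc⟩ := h
  have h1 : q'.colors = [] := by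
    rw [hqc]
    show q.edges.map _ = []
    rw [hq]; rfl
  have he : q'.edges = [] := List.map_eq_nil_iff.mp h1
  have h0 := hR.1
  rw [lift₂_s, lift₁_r] at h0
  exact Pth.ext' (congrArg Prod.snd h0) (he.trans hq.symm)

theorem act_single
    (hE : ∀ f f' : G₂.E, G₂.es f = G₂.es f' → G₂.er f = G₂.er f' →
      G₂.color f = G₂.color f' → f = f')
    {R : (prodG G₁ G₂).FactRule} {p : G₁.Pth} {q q' : G₂.Pth} {p' : G₁.Pth}
    (h : ActsTo R p q q' p') {f : G₂.E} (hq : q.edges = [f]) : q' = q := by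
  obtain ⟨lhs, rhs, hL, hR, hrel, hqc, hpc⟩ := h
  obtain ⟨f', hf'⟩ : ∃ f', q'.edges = [f'] := by
    refine List.length_eq_one_iff.mp ?_
    have h2 := congrArg List.length hqc
    simpa [Pth.colors, hq] using h2
  have h0 := hR.1
  rw [lift₂_s, lift₁_r] at h0
  have hbase : q'.base = q.base := congrArg Prod.snd h0
  have hs : G₂.es f' = G₂.es f := by
    rw [q'.base_src f' (by rw [hf']; rfl), q.base_src f (by rw [hq]; rfl), hbase]
  have hr2 : G₂.er f' = G₂.er f := by
    have hlr : lhs.r = (p.r, q.r) := by rw [hL.r_eq, lift₁_r]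
    have hrr : rhs.r = (p.r, q'.r) := by rw [hR.r_eq, lift₂_r]
    have h3 := (R.r_eq _ _ hrel).symm.trans hlr
    rw [hrr] at h3
    have h4 := congrArg Prod.snd h3
    simp only at h4
    rw [Pth.r_cons hf', Pth.r_cons hq] at h4
    exact h4
  have hc : G₂.color f' = G₂.color f := by
    have h3 : q'.edges.map G₂.color = q.edges.map G₂.color := hqc
    rw [hf', hq] at h3
    simpa using h3
  exact Pth.ext' hbase (by rw [hf', hq, hE f' f hs hr2 hc])

theorem act_triv
    (hE : ∀ f f' : G₂.E, G₂.es f = G₂.es f' → G₂.er f = G₂.er f' →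
      G₂.color f = G₂.color f' → f = f')
    (R : (prodG G₁ G₂).FactRule) :
    ∀ (n : ℕ) (q : G₂.Pth), q.edges.length = n →
      ∀ (p : G₁.Pth) (q' : G₂.Pth) (p' : G₁.Pth), ActsTo R p q q' p' → q' = q := by
  intro n
  induction n with
  | zero =>
    intro q hq p q' p' h
    exact act_nil h (List.length_eq_zero_iff.mp hq)
  | succ n ih =>
    intro q hq p q' p' h
    rcases hqe : q.edges with _ | ⟨f, rest⟩
    · exact act_nil h hqe
    obtain ⟨lhs₀, rhs₀, hL0, hR0, hrel0, hq'c, hp'c⟩ := h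
    have hcht := isComp_head_tail q f rest hqe
    have hq₂r : (tailPath q f rest hqe).r = G₂.es f := hcht.1.symm
    have hqr : q.r = G₂.er f := Pth.r_cons hqe
    have hq₁r : (edgePath G₂ f).r = q.r := by rw [edgePath_r, hqr]
    -- step 1 : p acts on the top edge, trivially
    obtain ⟨q₁', pA, hA⟩ := exists_act R p (edgePath G₂ f)
    have hq₁'eq : q₁' = edgePath G₂ f := act_single hE hA rfl
    rw [hq₁'eq] at hA
    obtain ⟨lhsA, rhsA, hLA, hRA, hrelA, -, hpAc⟩ := hA
    rw [hq₁r] at hLA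
    have hRA' : (prodG G₁ G₂).IsComp (lift₂ p.r (edgePath G₂ f))
        (lift₁ (G₂.es f) pA) rhsA := hRA
    have hpAs : pA.base = p.base := by
      have hb : lhsA.base = rhsA.base := R.s_eq _ _ hrelA
      rw [hLA.2.1, hRA'.2.1] at hb
      exact (congrArg Prod.fst hb).symm
    have hpAr : pA.r = p.r := by
      have h0 := hRA'.1
      rw [lift₂_s, lift₁_r] at h0
      exact (congrArg Prod.fst h0).symm
    -- step 2 : pA acts on the rest, trivially by induction
    obtain ⟨q₂', pB, hB⟩ := exists_act R pA (tailPath q f rest hqe)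
    have hq₂'eq : q₂' = tailPath q f rest hqe := by
      refine ih (tailPath q f rest hqe) ?_ pA q₂' pB hB
      have h5 := hq
      rw [hqe] at h5
      simpa using h5
    rw [hq₂'eq] at hB
    obtain ⟨lhsB, rhsB, hLB, hRB, hrelB, -, hpBc⟩ := hB
    rw [hq₂r] at hLB
    have hpAs' : pA.s = p.s := hpAs
    rw [hpAs'] at hLB
    rw [hpAr] at hRB
    have hRB' : (prodG G₁ G₂).IsComp (lift₂ p.r (tailPath q f rest hqe))
        (lift₁ q.s pB) rhsB := hRB
    have hpBr : pB.r = p.r := by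
      have h0 := hRB'.1
      rw [lift₂_s, lift₁_r] at h0
      exact (congrArg Prod.fst h0).symm
    -- the reference composite lhs
    have hc0 : (lift₁ (G₂ := G₂) q.r p).s = (lift₂ (G₁ := G₁) p.s q).r := by
      rw [lift₁_s, lift₂_r]
    set lhs := ColoredGraph.compPth _ _ hc0 with hlhs
    have hlhs0 : lhs₀ = lhs := IsComp.unique hL0 (isComp_compPth _ _ hc0)
    rw [hlhs0] at hrel0
    -- lhs = lhsA ∘ (lift₂ p.s q₂)
    have hClaim1 : (prodG G₁ G₂).IsComp lhsA (lift₂ p.s (tailPath q f rest hqe)) lhs := by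
      refine ⟨?_, ?_, ?_⟩
      · show lhsA.base = _
        rw [hLA.2.1, lift₂_base, lift₂_r, hq₂r]
        rfl
      · rfl
      · show (lift₁ q.r p).edges ++ (lift₂ p.s q).edges = _
        rw [hLA.2.2]
        simp only [lift₁_edges, lift₂_edges, edgePath_edges, tailPath_edges, hqe]
        simp [List.append_assoc]
        exact List.append_cons _ _ _
    have hM : rhsA.s = (lift₂ (G₁ := G₁) p.s (tailPath q f rest hqe)).r := by
      show rhsA.base = _
      rw [hRA'.2.1, lift₁_base, lift₂_r, hq₂r, hpAs]
      rfl
    set M := ColoredGraph.compPth _ _ hM with hMdef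
    have hrelM : R.rel lhs M :=
      R.kg0 lhsA rhsA _ _ lhs M hrelA (R.iseqv.refl _) hClaim1 (isComp_compPth _ _ hM)
    -- M = (lift₂ p.r q₁) ∘ lhsB
    have hClaim2 : (prodG G₁ G₂).IsComp (lift₂ p.r (edgePath G₂ f)) lhsB M := by
      refine ⟨?_, ?_, ?_⟩
      · rw [lift₂_s, hLB.r_eq, lift₁_r, hpAr]
        rfl
      · show (lift₂ p.s (tailPath q f rest hqe)).base = lhsB.base
        exact hLB.2.1.symm
      · show rhsA.edges ++ (lift₂ p.s (tailPath q f rest hqe)).edges = _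
        rw [hRA'.2.2, hLB.2.2, List.append_assoc]
    have hN : (lift₂ (G₁ := G₁) p.r (edgePath G₂ f)).s = rhsB.r := by
      rw [lift₂_s, ← R.r_eq _ _ hrelB, hLB.r_eq, lift₁_r, hpAr]
      rfl
    set N := ColoredGraph.compPth _ _ hN with hNdef
    have hrelN : R.rel M N :=
      R.kg0 _ _ lhsB rhsB M N (R.iseqv.refl _) hrelB hClaim2 (isComp_compPth _ _ hN)
    have hrelLN : R.rel lhs N := R.iseqv.trans hrelM hrelN
    -- N is the composite (lift₂ p.r q) ∘ (lift₁ q.s pB)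
    have hClaim3 : (prodG G₁ G₂).IsComp (lift₂ p.r q) (lift₁ q.s pB) N := by
      refine ⟨?_, ?_, ?_⟩
      · rw [lift₂_s, lift₁_r, hpBr]
      · show N.base = _
        rw [show N.base = rhsB.base from rfl, hRB'.2.1]
      · show (lift₂ p.r (edgePath G₂ f)).edges ++ rhsB.edges = _
        rw [hRB'.2.2]
        simp only [lift₂_edges, edgePath_edges, tailPath_edges, hqe]
        simp [List.append_assoc]
        rfl
    -- colors agree, so kg4-uniqueness identifies rhs₀ and N
    have hqcol : q.colors = G₂.color f :: (tailPath q f rest hqe).colors := by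
      show q.edges.map _ = _
      rw [hqe]; rfl
    have hcolN : N.colors
        = q.colors.map (Fin.natAdd k₁) ++ p.colors.map (Fin.castAdd k₂) := by
      rw [(isComp_compPth _ _ hN).colors_eq, hRB'.colors_eq, lift₂_colors, lift₂_colors,
        lift₁_colors, hpBc, hpAc, hqcol]
      simp [Pth.colors, List.append_assoc]
    have hcolR : rhs₀.colors
        = q.colors.map (Fin.natAdd k₁) ++ p.colors.map (Fin.castAdd k₂) := by
      rw [hR0.colors_eq, lift₂_colors, lift₁_colors, hq'c, hp'c]
    have hlc : lhs.colors = p.colors.map (Fin.castAdd k₂) ++ q.colors.map (Fin.natAdd k₁) := by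
      rw [(isComp_compPth _ _ hc0).colors_eq, lift₁_colors, lift₂_colors]
    obtain ⟨u, -, huniq⟩ :=
      R.kg4 lhs (q.colors.map (Fin.natAdd k₁) ++ p.colors.map (Fin.castAdd k₂))
        (by rw [hlc]; exact List.perm_append_comm)
    have hRN : rhs₀ = N :=
      (huniq rhs₀ ⟨hrel0, hcolR⟩).trans (huniq N ⟨hrelLN, hcolN⟩).symm
    -- extract q' = q
    have hedges : (lift₂ (G₁ := G₁) p.r q').edges ++ (lift₁ (G₂ := G₂) q.s p').edges
        = (lift₂ (G₁ := G₁) p.r q).edges ++ (lift₁ (G₂ := G₂) q.s pB).edges := by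
      rw [← hR0.2.2, ← hClaim3.2.2, hRN]
    have hlen : q'.edges.length = q.edges.length := by
      have h6 := congrArg List.length hq'c
      simpa [Pth.colors] using h6
    have hmapeq : q'.edges.map (fun f => (Sum.inr (p.r, f) : (prodG G₁ G₂).E))
        = q.edges.map (fun f => (Sum.inr (p.r, f) : (prodG G₁ G₂).E)) := by
      have h7 := (List.append_inj hedges
        (by simp only [lift₂_edges]; exact (List.length_map ..).trans (hlen.trans (List.length_map ..).symm))).1
      exact h7
    have hqedges : q'.edges = q.edges :=
      List.map_injective_iff.mpr (inr_map_inj p.r) hmapeq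
    have h0 := hR0.1
    rw [lift₂_s, lift₁_r] at h0
    exact Pth.ext' (congrArg Prod.snd h0) hqedges

end Stmt12Main
open ColoredGraph in
/-- Let `Γ` be a `k₂`-graph whose one-skeleton admits no nontrivial
vertex-fixing colored-graph automorphism. Then in any quasi-product `Ω` with quasi-factors
`Λ` and `Γ`, the quasi-factor `Γ` is stable: `p ▷ q = q` for all paths. -/
theorem stmt12 {k₁ k₂ : ℕ} (Q : QuasiProduct k₁ k₂)
    (H : ∀ F : Q.G₂.E → Q.G₂.E, VertexFixingAut Q.G₂ F → F = id) :
    Q.Stable := by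
  classical
  have hE : ∀ f f' : Q.G₂.E, Q.G₂.es f = Q.G₂.es f' → Q.G₂.er f = Q.G₂.er f' →
      Q.G₂.color f = Q.G₂.color f' → f = f' := by
    intro f f' h1 h2 h3
    by_contra hne
    have hvfa : VertexFixingAut Q.G₂ (Equiv.swap f f') := by
      refine ⟨(Equiv.swap f f').bijective, ?_⟩
      intro e
      rcases eq_or_ne e f with rfl | hef
      · rw [Equiv.swap_apply_left]
        exact ⟨h1.symm, h2.symm, h3.symm⟩
      · rcases eq_or_ne e f' with rfl | hef'
        · rw [Equiv.swap_apply_right]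
          exact ⟨h1, h2, h3⟩
        · rw [Equiv.swap_apply_of_ne_of_ne hef hef']
          exact ⟨rfl, rfl, rfl⟩
    have hid := congrFun (H _ hvfa) f
    rw [Equiv.swap_apply_left] at hid
    exact hne hid.symm
  intro p q q' p' h
  exact act_triv hE Q.rOmega q.edges.length q rfl p q' p' h
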